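/- Let B > 0, q, m positive integers, e ∈ ℤ_q^m, and D = D_{ℤ_q^m, B} the truncated discrete Gaussian. Then the total variation distance satisfies ‖D − (D+e)‖_{TV}² ≤ 2(1 − exp(−2π √m ‖e‖ / B)). In particular, if ‖e‖/B → 0 (as a function of a parameter λ, with ‖e‖√m/B negligible), the statistical distance between D and D+e is negligible. -/

import Mathlib

set_option maxHeartbeats 1000000
/-- The representative of `x : ZMod q` in `(−q/2, q/2]`. -/
def zrep (q : ℕ) [NeZero q] (x : ZMod q) : ℤ :=
  if 2 * (x.val : ℤ) ≤ (q : ℤ) then (x.val : ℤ) else (x.val : ℤ) - q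

/-- The absolute value `|x|` of the representative of `x : ZMod q` in `(−q/2, q/2]`. -/
def zqabs (q : ℕ) [NeZero q] (x : ZMod q) : ℤ := |zrep q x|

open Finset Real

section
variable (q : ℕ) [NeZero q]

lemma intCast_zrep (x : ZMod q) : ((zrep q x : ℤ) : ZMod q) = x := by
  unfold zrep
  split_ifs <;> push_cast <;>
    simp [ZMod.natCast_val, ZMod.cast_id, ZMod.natCast_self]

lemma zrep_lb (x : ZMod q) : -(q : ℤ) < 2 * zrep q x := by
  unfold zrep
  have h0 : 0 ≤ (x.val : ℤ) := Int.ofNat_nonneg _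
  split_ifs with h
  · have : 0 < (q : ℤ) := by exact_mod_cast Nat.pos_of_ne_zero (NeZero.ne q)
    omega
  · omega

lemma zrep_ub (x : ZMod q) : 2 * zrep q x ≤ (q : ℤ) := by
  unfold zrep
  have h1 : (x.val : ℤ) < q := by exact_mod_cast ZMod.val_lt x
  split_ifs with h
  · exact h
  · omega

lemma two_zqabs_le (x : ZMod q) : 2 * zqabs q x ≤ (q : ℤ) := by
  unfold zqabs
  rcases abs_cases (zrep q x) with ⟨h, _⟩ | ⟨h, _⟩
  · rw [h]; exact zrep_ub q x
  · rw [h]; have := zrep_lb q x; omega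

lemma zqabs_nonneg (x : ZMod q) : 0 ≤ zqabs q x := abs_nonneg _

/-- Minimality: `zqabs q x ≤ |k|` for any integer `k` representing `x`. -/
lemma zqabs_le_of_cast {k : ℤ} {x : ZMod q} (h : (k : ZMod q) = x) : zqabs q x ≤ |k| := by
  have hq : (0:ℤ) < q := by exact_mod_cast Nat.pos_of_ne_zero (NeZero.ne q)
  have hdvd : (q : ℤ) ∣ (k - zrep q x) := by
    rw [← ZMod.intCast_zmod_eq_zero_iff_dvd]
    push_cast
    rw [intCast_zrep, h, sub_self]
  rcases eq_or_ne k (zrep q x) with he | hne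
  · rw [he]; exact le_refl _
  · have h1 : (q : ℤ) ≤ |k - zrep q x| := by
      rcases hdvd with ⟨t, ht⟩
      have ht' : t ≠ 0 := by
        rintro rfl; simp at ht; omega
      rw [ht, abs_mul, abs_of_pos hq]
      nlinarith [Int.one_le_abs ht', abs_nonneg t]
    have h2 := zrep_lb q x
    have h3 := zrep_ub q x
    unfold zqabs
    rcases abs_cases (k - zrep q x) with ⟨ha, _⟩ | ⟨ha, _⟩ <;>
      rcases abs_cases (zrep q x) with ⟨hb, _⟩ | ⟨hb, _⟩ <;>
      rcases abs_cases k with ⟨hc, _⟩ | ⟨hc, _⟩ <;> omega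

lemma zqabs_neg (x : ZMod q) : zqabs q (-x) = zqabs q x := by
  have h1 : zqabs q (-x) ≤ |(-(zrep q x))| := by
    apply zqabs_le_of_cast; push_cast [intCast_zrep]; ring
  have h2 : zqabs q x ≤ |(-(zrep q (-x)))| := by
    apply zqabs_le_of_cast; push_cast [intCast_zrep]; ring
  rw [abs_neg] at h1 h2
  exact le_antisymm h1 h2

lemma zqabs_add_le (x y : ZMod q) : zqabs q (x + y) ≤ zqabs q x + zqabs q y := by
  have h : zqabs q (x + y) ≤ |zrep q x + zrep q y| := by
    apply zqabs_le_of_cast; push_cast [intCast_zrep]; ring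
  exact h.trans (abs_add_le _ _)

lemma zqabs_zero : zqabs q (0 : ZMod q) = 0 := by
  unfold zqabs zrep
  simp [ZMod.val_zero]

lemma eq_zero_of_zqabs_eq_zero {x : ZMod q} (h : zqabs q x = 0) : x = 0 := by
  have h0 : zrep q x = 0 := by unfold zqabs at h; exact abs_eq_zero.mp h
  have h1 := intCast_zrep q x
  rw [h0] at h1; simpa using h1.symm

end

/-- The truncated discrete Gaussian density over `ZMod q` with parameter `B`, supported on
`{x : |x| ≤ B}` with density proportional to `exp(−π|x|²/B²)`. -/
noncomputable def dGauss (q : ℕ) [NeZero q] (B : ℝ) (x : ZMod q) : ℝ :=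
  if (zqabs q x : ℝ) ≤ B then
    Real.exp (-Real.pi * (zqabs q x : ℝ) ^ 2 / B ^ 2) /
      (∑ y : ZMod q, if (zqabs q y : ℝ) ≤ B then
        Real.exp (-Real.pi * (zqabs q y : ℝ) ^ 2 / B ^ 2) else 0)
  else 0

section
variable (q : ℕ) [NeZero q]

noncomputable def Znorm (B : ℝ) : ℝ :=
  ∑ y : ZMod q, if (zqabs q y : ℝ) ≤ B then
    Real.exp (-Real.pi * (zqabs q y : ℝ) ^ 2 / B ^ 2) else 0

lemma dGauss_eq (B : ℝ) (x : ZMod q) :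
    dGauss q B x = if (zqabs q x : ℝ) ≤ B then
      Real.exp (-Real.pi * (zqabs q x : ℝ) ^ 2 / B ^ 2) / Znorm q B else 0 := rfl

lemma Znorm_ge_one {B : ℝ} (hB : 0 < B) : 1 ≤ Znorm q B := by
  unfold Znorm
  have h0 : (if (zqabs q (0:ZMod q) : ℝ) ≤ B then
      Real.exp (-Real.pi * (zqabs q (0:ZMod q) : ℝ) ^ 2 / B ^ 2) else 0) = 1 := by
    rw [zqabs_zero]
    simp [hB.le]
  calc (1:ℝ) = _ := h0.symm
    _ ≤ _ := by
      apply Finset.single_le_sum (f := fun y : ZMod q => if (zqabs q y : ℝ) ≤ B then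
        Real.exp (-Real.pi * (zqabs q y : ℝ) ^ 2 / B ^ 2) else 0) _ (Finset.mem_univ 0)
      intro i _
      positivity

lemma Znorm_pos {B : ℝ} (hB : 0 < B) : 0 < Znorm q B :=
  lt_of_lt_of_le one_pos (Znorm_ge_one q hB)

lemma Znorm_nonneg (B : ℝ) : 0 ≤ Znorm q B := by
  unfold Znorm
  apply Finset.sum_nonneg
  intro y _
  split_ifs
  · positivity
  · exact le_refl 0

lemma dGauss_nonneg (B : ℝ) (x : ZMod q) : 0 ≤ dGauss q B x := by
  rw [dGauss_eq]
  split_ifs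
  · exact div_nonneg (Real.exp_nonneg _) (Znorm_nonneg q B)
  · exact le_refl 0

lemma sum_dGauss {B : ℝ} (hB : 0 < B) : ∑ y : ZMod q, dGauss q B y = 1 := by
  have hZ := Znorm_pos q hB
  have : ∑ y : ZMod q, dGauss q B y = (∑ y : ZMod q, if (zqabs q y : ℝ) ≤ B then
      Real.exp (-Real.pi * (zqabs q y : ℝ) ^ 2 / B ^ 2) else 0) / Znorm q B := by
    rw [Finset.sum_div]
    apply Finset.sum_congr rfl
    intro y _
    rw [dGauss_eq]
    split_ifs <;> simp
  rw [this]
  rw [show (∑ y : ZMod q, if (zqabs q y : ℝ) ≤ B then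
      Real.exp (-Real.pi * (zqabs q y : ℝ) ^ 2 / B ^ 2) else 0) = Znorm q B from rfl]
  field_simp

lemma sum_dGauss_shift {B : ℝ} (hB : 0 < B) (c : ZMod q) :
    ∑ y : ZMod q, dGauss q B (y - c) = 1 := by
  rw [← sum_dGauss q hB]
  exact Fintype.sum_equiv (Equiv.subRight c) _ _ (fun y => rfl)

end

section
variable (q : ℕ) [NeZero q]

/-- Pointwise bound on common support. -/
lemma pointwise_common {B : ℝ} (hB : 0 < B) (c y : ZMod q)
    (hy : (zqabs q y : ℝ) ≤ B) (hyc : (zqabs q (y - c) : ℝ) ≤ B) :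
    dGauss q B y - dGauss q B (y - c) ≤
      (1 - Real.exp (-(2 * Real.pi * (zqabs q c : ℝ) / B))) * dGauss q B y := by
  have hZ := Znorm_pos q hB
  have htri : zqabs q (y - c) ≤ zqabs q y + zqabs q c := by
    have := zqabs_add_le q y (-c)
    rwa [zqabs_neg, show y + -c = y - c by ring] at this
  set a : ℝ := (zqabs q y : ℝ) with ha
  set b : ℝ := (zqabs q (y - c) : ℝ) with hb
  set cc : ℝ := (zqabs q c : ℝ) with hcc
  have htriR : b ≤ a + cc := by rw [ha, hb, hcc]; exact_mod_cast htri
  have ha0 : 0 ≤ a := by rw [ha]; exact_mod_cast zqabs_nonneg q y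
  have hb0 : 0 ≤ b := by rw [hb]; exact_mod_cast zqabs_nonneg q (y - c)
  have hc0 : 0 ≤ cc := by rw [hcc]; exact_mod_cast zqabs_nonneg q c
  rw [dGauss_eq, dGauss_eq, if_pos hy, if_pos hyc, ← hb, ← ha]
  have hquad : b ^ 2 - a ^ 2 ≤ 2 * cc * B := by nlinarith
  have hpi := Real.pi_pos
  have key : Real.exp (-(2 * Real.pi * cc / B)) * Real.exp (-Real.pi * a ^ 2 / B ^ 2) ≤
      Real.exp (-Real.pi * b ^ 2 / B ^ 2) := by
    rw [← Real.exp_add]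
    apply Real.exp_le_exp.mpr
    have hB2 : (0:ℝ) < B ^ 2 := by positivity
    rw [show -(2 * Real.pi * cc / B) = -(2 * Real.pi * cc * B) / B ^ 2 by
      field_simp]
    rw [← add_div, div_le_div_iff₀ hB2 hB2]
    nlinarith [mul_le_mul_of_nonneg_left hquad hpi.le, sq_nonneg B]
  have key2 : Real.exp (-(2 * Real.pi * cc / B)) * (Real.exp (-Real.pi * a ^ 2 / B ^ 2) / Znorm q B)
      ≤ Real.exp (-Real.pi * b ^ 2 / B ^ 2) / Znorm q B := by
    rw [mul_div_assoc']
    exact div_le_div_of_nonneg_right key hZ.le |>.trans_eq rfl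
  nlinarith [key2]

/-- Lower bound on the normalizer when the modulus is large. -/
lemma Znorm_lb {B : ℝ} (hB : 0 < B) (hq : 2 * B < (q : ℝ)) :
    (2 * (⌊B⌋ : ℝ) + 1) * Real.exp (-Real.pi) ≤ Znorm q B := by
  set K : ℤ := ⌊B⌋ with hK
  have hK0 : 0 ≤ K := Int.floor_nonneg.mpr hB.le
  have hKB : (K : ℝ) ≤ B := Int.floor_le B
  set f : ZMod q → ℝ := fun y => if (zqabs q y : ℝ) ≤ B then
    Real.exp (-Real.pi * (zqabs q y : ℝ) ^ 2 / B ^ 2) else 0 with hf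
  have hf0 : ∀ y, 0 ≤ f y := by
    intro y
    rw [hf]
    dsimp only
    split_ifs
    · positivity
    · exact le_rfl
  set S : Finset (ZMod q) := (Finset.Icc (-K) K).image (fun k : ℤ => (k : ZMod q)) with hS
  have hinj : Set.InjOn (fun k : ℤ => (k : ZMod q)) (Finset.Icc (-K) K) := by
    intro k1 h1 k2 h2 hEq
    simp only [Finset.coe_Icc, Set.mem_Icc] at h1 h2
    have hdvd : (q : ℤ) ∣ (k1 - k2) := by
      rw [← ZMod.intCast_zmod_eq_zero_iff_dvd]
      push_cast
      simp only at hEq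
      rw [hEq, sub_self]
    have habs : |k1 - k2| < (q : ℤ) := by
      have : (|k1 - k2| : ℝ) < (q : ℝ) := by
        have h1' : (k1 : ℝ) ≤ K := by exact_mod_cast h1.2
        have h2' : -(K : ℝ) ≤ (k2 : ℝ) := by exact_mod_cast h2.1
        have h1'' : -(K : ℝ) ≤ (k1 : ℝ) := by exact_mod_cast h1.1
        have h2'' : (k2 : ℝ) ≤ K := by exact_mod_cast h2.2
        push_cast
        rw [abs_sub_lt_iff]
        constructor <;> nlinarith
      exact_mod_cast this
    rcases hdvd with ⟨t, ht⟩
    have hq0 : (0:ℤ) < (q:ℤ) := by exact_mod_cast Nat.pos_of_ne_zero (NeZero.ne q)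
    have ht0 : t = 0 := by
      by_contra hzz
      rw [ht, abs_mul, abs_of_pos hq0] at habs
      nlinarith [Int.one_le_abs hzz, abs_nonneg t]
    rw [ht0, mul_zero] at ht
    omega
  have hcard : S.card = (2 * K + 1).toNat := by
    rw [hS, Finset.card_image_of_injOn hinj, Int.card_Icc]
    congr 1; omega
  have hterm : ∀ y ∈ S, Real.exp (-Real.pi) ≤ f y := by
    intro y hy
    rw [hS] at hy
    obtain ⟨k, hk, rfl⟩ := Finset.mem_image.mp hy
    simp only [Finset.mem_Icc] at hk
    have hzle : zqabs q ((k : ZMod q)) ≤ |k| := zqabs_le_of_cast q rfl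
    have hkK : |k| ≤ K := by rw [abs_le]; exact hk
    have haB : (zqabs q ((k : ZMod q)) : ℝ) ≤ B := by
      calc (zqabs q ((k : ZMod q)) : ℝ) ≤ (|k| : ℝ) := by exact_mod_cast hzle
        _ ≤ (K : ℝ) := by exact_mod_cast hkK
        _ ≤ B := hKB
    have ha0 : (0:ℝ) ≤ (zqabs q ((k : ZMod q)) : ℝ) := by
      exact_mod_cast zqabs_nonneg q _
    rw [hf]; dsimp only
    rw [if_pos haB]
    apply Real.exp_le_exp.mpr
    rw [le_div_iff₀ (by positivity : (0:ℝ) < B ^ 2)]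
    nlinarith [Real.pi_pos, pow_le_pow_left₀ ha0 haB 2]
  calc (2 * (K : ℝ) + 1) * Real.exp (-Real.pi)
      = (S.card : ℝ) * Real.exp (-Real.pi) := by
        rw [hcard]
        rw [show ((2 * K + 1).toNat : ℝ) = ((2 * K + 1 : ℤ) : ℝ) by
          exact_mod_cast congrArg (fun z : ℤ => (z : ℝ))
            (Int.toNat_of_nonneg (show (0:ℤ) ≤ 2 * K + 1 by omega))]
        push_cast
        ring
    _ ≤ ∑ y ∈ S, f y := by
        have := Finset.card_nsmul_le_sum S f (Real.exp (-Real.pi)) hterm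
        rwa [nsmul_eq_mul] at this
    _ ≤ ∑ y : ZMod q, f y :=
        Finset.sum_le_sum_of_subset_of_nonneg (Finset.subset_univ S)
          (fun y _ _ => hf0 y)
    _ = Znorm q B := rfl

/-- The boundary set: support points whose shift leaves the support. -/
noncomputable def bset (B : ℝ) (c : ZMod q) : Finset (ZMod q) :=
  Finset.univ.filter (fun y => (zqabs q y : ℝ) ≤ B ∧ B < (zqabs q (y - c) : ℝ))

lemma bset_card {B : ℝ} (hB : 0 < B) (c : ZMod q) :
    ((bset q B c).card : ℝ) ≤ 2 * (zqabs q c : ℝ) := by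
  set cz : ℤ := zqabs q c with hcz
  have hcz0 : 0 ≤ cz := zqabs_nonneg q c
  set K : ℤ := ⌊B⌋ with hK
  set J : Finset ℤ := Finset.Ioc (K - cz) K ∪ Finset.Ico (-K) (cz - K) with hJ
  have hmaps : ∀ y ∈ bset q B c, zrep q y ∈ J := by
    intro y hy
    rw [bset, Finset.mem_filter] at hy
    obtain ⟨-, hy1, hy2⟩ := hy
    have htri : zqabs q (y - c) ≤ zqabs q y + cz := by
      have := zqabs_add_le q y (-c)
      rwa [zqabs_neg, show y + -c = y - c by ring] at this
    have hlow : (B : ℝ) - (cz : ℝ) < (zqabs q y : ℝ) := by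
      have : (zqabs q (y - c) : ℝ) ≤ (zqabs q y : ℝ) + (cz : ℝ) := by exact_mod_cast htri
      linarith
    have hup : zqabs q y ≤ K := Int.le_floor.mpr hy1
    have hlow' : K - cz < zqabs q y := by
      have h1 : (⌊B - (cz : ℝ)⌋ : ℤ) < zqabs q y := Int.floor_lt.mpr (by exact_mod_cast hlow)
      rwa [Int.floor_sub_intCast] at h1
    rw [hJ, Finset.mem_union]
    rcases le_or_gt 0 (zrep q y) with hpos | hneg
    · left
      rw [Finset.mem_Ioc]
      have : zqabs q y = zrep q y := abs_of_nonneg hpos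
      omega
    · right
      rw [Finset.mem_Ico]
      have : zqabs q y = -zrep q y := abs_of_neg hneg
      omega
  have hinj : Set.InjOn (zrep q) (bset q B c) := by
    intro y1 _ y2 _ hEq
    have h1 := intCast_zrep q y1
    have h2 := intCast_zrep q y2
    rw [← h1, ← h2, hEq]
  have hcard := Finset.card_le_card_of_injOn (zrep q) hmaps hinj
  have hJcard : (J.card : ℤ) ≤ 2 * cz := by
    calc (J.card : ℤ) ≤ ((Finset.Ioc (K - cz) K).card : ℤ) + ((Finset.Ico (-K) (cz - K)).card : ℤ) := by
          exact_mod_cast Finset.card_union_le _ _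
      _ ≤ 2 * cz := by
          rw [Int.card_Ioc, Int.card_Ico]
          omega
  have : ((bset q B c).card : ℤ) ≤ 2 * cz := le_trans (by exact_mod_cast hcard) hJcard
  exact_mod_cast this

lemma boundary_value {B : ℝ} (hB : 0 < B) (c : ZMod q)
    (hs : 2 * Real.pi * (zqabs q c : ℝ) ≤ Real.log 2 * B) {y : ZMod q}
    (hy1 : (zqabs q y : ℝ) ≤ B) (hy2 : B < (zqabs q (y - c) : ℝ)) :
    dGauss q B y ≤ 2 * Real.exp (-Real.pi) / Znorm q B := by
  have hZ := Znorm_pos q hB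
  set a : ℝ := (zqabs q y : ℝ) with ha
  set cc : ℝ := (zqabs q c : ℝ) with hcc
  have ha0 : 0 ≤ a := by rw [ha]; exact_mod_cast zqabs_nonneg q y
  have hc0 : 0 ≤ cc := by rw [hcc]; exact_mod_cast zqabs_nonneg q c
  have hpi := Real.pi_gt_d6
  have hlog := Real.log_two_lt_d9
  have hcB : cc < B := by nlinarith
  have hlow : B - cc < a := by
    have htri : zqabs q (y - c) ≤ zqabs q y + zqabs q c := by
      have := zqabs_add_le q y (-c)
      rwa [zqabs_neg, show y + -c = y - c by ring] at this
    have : (zqabs q (y - c) : ℝ) ≤ a + cc := by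
      rw [ha, hcc]; exact_mod_cast htri
    linarith
  rw [dGauss_eq, if_pos hy1, ← ha]
  have key : Real.exp (-Real.pi * a ^ 2 / B ^ 2) ≤ 2 * Real.exp (-Real.pi) := by
    have h1 : Real.exp (-Real.pi * a ^ 2 / B ^ 2) ≤ Real.exp (-Real.pi + Real.log 2) := by
      apply Real.exp_le_exp.mpr
      rw [div_le_iff₀ (by positivity : (0:ℝ) < B ^ 2)]
      have hs' : 2 * Real.pi * cc / B ≤ Real.log 2 := by
        rw [div_le_iff₀ hB]; linarith
      have hsq : (B - cc) ^ 2 ≤ a ^ 2 := by nlinarith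
      have hpi0 := Real.pi_pos
      nlinarith [sq_nonneg cc, mul_pos hB hB, mul_le_mul_of_nonneg_left hsq hpi0.le,
        mul_le_mul_of_nonneg_right hs' (mul_pos hB hB).le]
    rw [Real.exp_add, Real.exp_log (by norm_num : (0:ℝ) < 2)] at h1
    linarith
  apply div_le_div_of_nonneg_right key hZ.le |>.trans_eq rfl

/-- Single-coordinate total-variation bound. -/
lemma single_tv {B : ℝ} (hB : 0 < B) (c : ZMod q) (hc1 : 1 ≤ zqabs q c)
    (hs : 2 * Real.pi * (zqabs q c : ℝ) ≤ Real.log 2 * B) :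
    ∑ y : ZMod q, |dGauss q B y - dGauss q B (y - c)| ≤
      2 * ((2 * Real.pi + 2.2) * (zqabs q c : ℝ) / B) := by
  set cc : ℝ := (zqabs q c : ℝ) with hcc
  have hc1R : (1:ℝ) ≤ cc := by rw [hcc]; exact_mod_cast hc1
  have hpi := Real.pi_gt_d6
  have hpi' := Real.pi_lt_d2
  have hlog := Real.log_two_lt_d9
  have hB9 : 9 ≤ B := by nlinarith
  -- sum of differences is zero
  have hzero : ∑ y : ZMod q, (dGauss q B y - dGauss q B (y - c)) = 0 := by
    rw [Finset.sum_sub_distrib, sum_dGauss q hB, sum_dGauss_shift q hB c, sub_self]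
  -- |d| = 2 max d 0 - d
  have habs : ∀ d : ℝ, |d| = 2 * max d 0 - d := by
    intro d
    rcases le_total 0 d with h | h
    · rw [abs_of_nonneg h, max_eq_left h]; ring
    · rw [abs_of_nonpos h, max_eq_right h]; ring
  have hsplit : ∑ y : ZMod q, |dGauss q B y - dGauss q B (y - c)| =
      2 * ∑ y : ZMod q, max (dGauss q B y - dGauss q B (y - c)) 0 := by
    calc ∑ y : ZMod q, |dGauss q B y - dGauss q B (y - c)|
        = ∑ y : ZMod q, (2 * max (dGauss q B y - dGauss q B (y - c)) 0 -
            (dGauss q B y - dGauss q B (y - c))) := by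
          apply Finset.sum_congr rfl; intro y _; rw [habs]
      _ = 2 * (∑ y : ZMod q, max (dGauss q B y - dGauss q B (y - c)) 0) -
            ∑ y : ZMod q, (dGauss q B y - dGauss q B (y - c)) := by
          rw [Finset.sum_sub_distrib, Finset.mul_sum]
      _ = _ := by rw [hzero]; ring
  rw [hsplit]
  -- pointwise bound on the positive part
  have hptwise : ∀ y : ZMod q, max (dGauss q B y - dGauss q B (y - c)) 0 ≤
      (1 - Real.exp (-(2 * Real.pi * cc / B))) * dGauss q B y +
        (if y ∈ bset q B c then 2 * Real.exp (-Real.pi) / Znorm q B else 0) := by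
    intro y
    have hg0 := dGauss_nonneg q B y
    have hg0' := dGauss_nonneg q B (y - c)
    have hfac : 0 ≤ 1 - Real.exp (-(2 * Real.pi * cc / B)) := by
      have : Real.exp (-(2 * Real.pi * cc / B)) ≤ 1 := by
        apply Real.exp_le_one_iff.mpr
        have : 0 ≤ 2 * Real.pi * cc / B := by positivity
        linarith
      linarith
    have hZpos := Znorm_pos q hB
    rcases le_or_gt (zqabs q y : ℝ) B with hy1 | hy1
    · rcases le_or_gt (zqabs q (y - c) : ℝ) B with hy2 | hy2
      · -- common support
        have hnotb : y ∉ bset q B c := by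
          rw [bset, Finset.mem_filter]
          push_neg
          intro _ _; exact hy2
        rw [if_neg hnotb, add_zero]
        apply max_le
        · exact pointwise_common q hB c y hy1 hy2
        · positivity
      · -- boundary
        have hb : y ∈ bset q B c := by
          rw [bset, Finset.mem_filter]
          exact ⟨Finset.mem_univ y, hy1, hy2⟩
        rw [if_pos hb]
        apply max_le
        · have h1 : dGauss q B y - dGauss q B (y - c) ≤ dGauss q B y := by linarith
          have h2 := boundary_value q hB c hs hy1 hy2
          nlinarith [mul_nonneg hfac hg0]
        · positivity
    · -- y outside support
      have hgy : dGauss q B y = 0 := by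
        rw [dGauss_eq, if_neg (not_le.mpr hy1)]
      apply max_le
      · rw [hgy]
        have : (0:ℝ) ≤ if y ∈ bset q B c then 2 * Real.exp (-Real.pi) / Znorm q B else 0 := by
          split_ifs
          · positivity
          · exact le_rfl
        nlinarith
      · rw [hgy]
        have : (0:ℝ) ≤ if y ∈ bset q B c then 2 * Real.exp (-Real.pi) / Znorm q B else 0 := by
          split_ifs
          · positivity
          · exact le_rfl
        nlinarith
  -- sum the pointwise bounds
  have hsum : ∑ y : ZMod q, max (dGauss q B y - dGauss q B (y - c)) 0 ≤
      (1 - Real.exp (-(2 * Real.pi * cc / B))) +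
        ((bset q B c).card : ℝ) * (2 * Real.exp (-Real.pi) / Znorm q B) := by
    calc ∑ y : ZMod q, max (dGauss q B y - dGauss q B (y - c)) 0
        ≤ ∑ y : ZMod q, ((1 - Real.exp (-(2 * Real.pi * cc / B))) * dGauss q B y +
            (if y ∈ bset q B c then 2 * Real.exp (-Real.pi) / Znorm q B else 0)) :=
          Finset.sum_le_sum (fun y _ => hptwise y)
      _ = (1 - Real.exp (-(2 * Real.pi * cc / B))) * (∑ y : ZMod q, dGauss q B y) +
            ∑ y : ZMod q, (if y ∈ bset q B c then 2 * Real.exp (-Real.pi) / Znorm q B else 0) := by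
          rw [Finset.sum_add_distrib, Finset.mul_sum]
      _ = _ := by
          rw [sum_dGauss q hB, mul_one, Finset.sum_ite_mem, Finset.univ_inter,
            Finset.sum_const, nsmul_eq_mul]
  -- bound the boundary part
  have hbdy : ((bset q B c).card : ℝ) * (2 * Real.exp (-Real.pi) / Znorm q B) ≤ 2.2 * cc / B := by
    rcases Finset.eq_empty_or_nonempty (bset q B c) with he | hne
    · rw [he]; simp; positivity
    · obtain ⟨y, hy⟩ := hne
      rw [bset, Finset.mem_filter] at hy
      obtain ⟨-, hy1, hy2⟩ := hy
      have hq2B : 2 * B < (q : ℝ) := by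
        have h1 : 2 * zqabs q (y - c) ≤ (q : ℤ) := two_zqabs_le q (y - c)
        have h1R : 2 * (zqabs q (y - c) : ℝ) ≤ (q : ℝ) := by exact_mod_cast h1
        linarith
      have hZlb := Znorm_lb q hB hq2B
      have hfloor : (⌊B⌋ : ℝ) > B - 1 := Int.sub_one_lt_floor B
      have hden : (17:ℝ)/9 * B ≤ 2 * (⌊B⌋ : ℝ) + 1 := by nlinarith
      have hdenpos : (0:ℝ) < 2 * (⌊B⌋ : ℝ) + 1 := by nlinarith
      have hcard := bset_card q hB c
      rw [← hcc] at hcard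
      have hZpos := Znorm_pos q hB
      have hexp : (0:ℝ) < Real.exp (-Real.pi) := Real.exp_pos _
      have hstep : 2 * Real.exp (-Real.pi) / Znorm q B ≤ 2 / (2 * (⌊B⌋ : ℝ) + 1) := by
        rw [div_le_div_iff₀ hZpos hdenpos]
        calc 2 * Real.exp (-Real.pi) * (2 * (⌊B⌋ : ℝ) + 1)
            = 2 * ((2 * (⌊B⌋ : ℝ) + 1) * Real.exp (-Real.pi)) := by ring
          _ ≤ 2 * Znorm q B := by linarith [hZlb]
      calc ((bset q B c).card : ℝ) * (2 * Real.exp (-Real.pi) / Znorm q B)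
          ≤ (2 * cc) * (2 / (2 * (⌊B⌋ : ℝ) + 1)) := by
            apply mul_le_mul hcard hstep (by positivity) (by linarith)
        _ = 4 * cc / (2 * (⌊B⌋ : ℝ) + 1) := by ring
        _ ≤ 2.2 * cc / B := by
            rw [div_le_div_iff₀ hdenpos hB]
            nlinarith
  -- the main (1 - exp) part
  have hmain : 1 - Real.exp (-(2 * Real.pi * cc / B)) ≤ 2 * Real.pi * cc / B := by
    have := Real.add_one_le_exp (-(2 * Real.pi * cc / B))
    linarith
  calc 2 * ∑ y : ZMod q, max (dGauss q B y - dGauss q B (y - c)) 0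
      ≤ 2 * ((2 * Real.pi * cc / B) + 2.2 * cc / B) := by
        have := hsum.trans (add_le_add hmain hbdy)
        linarith
    _ = 2 * ((2 * Real.pi + 2.2) * cc / B) := by ring

/-- Quadratic upper bound for `exp (-t)`, `t ≥ 0`. -/
lemma exp_neg_le_quadratic {t : ℝ} (ht : 0 ≤ t) :
    Real.exp (-t) ≤ 1 - t + t ^ 2 / 2 := by
  have h1 : 1 + t + t ^ 2 / 2 ≤ Real.exp t := by
    have := Real.sum_le_exp_of_nonneg ht 3
    simp [Finset.sum_range_succ, Nat.factorial] at this
    nlinarith [this]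
  have h2 : Real.exp (-t) * Real.exp t = 1 := by
    rw [← Real.exp_add]; simp
  have h3 : (0:ℝ) < 1 + t + t ^ 2 / 2 := by nlinarith
  have h4 : (1 - t + t ^ 2 / 2) * (1 + t + t ^ 2 / 2) = 1 + t ^ 4 / 4 := by ring
  nlinarith [Real.exp_pos (-t), mul_le_mul_of_nonneg_left h1 (Real.exp_pos (-t)).le,
    sq_nonneg t, pow_le_pow_left₀ ht le_rfl 4]

/-- Hybrid argument: total variation of products is at most the sum of
coordinatewise total variations. -/
lemma hybrid {α : Type*} [Fintype α] :
    ∀ (m : ℕ) (a b : Fin m → α → ℝ), (∀ i y, 0 ≤ a i y) → (∀ i y, 0 ≤ b i y) →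
      (∀ i, ∑ y : α, a i y ≤ 1) → (∀ i, ∑ y : α, b i y ≤ 1) →
      ∑ x : Fin m → α, |(∏ i, a i (x i)) - ∏ i, b i (x i)| ≤
        ∑ i, ∑ y : α, |a i y - b i y| := by
  intro m
  induction m with
  | zero =>
    intro a b _ _ _ _
    simp
  | succ n ih =>
    intro a b ha hb ha1 hb1
    classical
    -- reindex the sum over `Fin (n+1) → α` by `α × (Fin n → α)`
    have hre : ∑ x : Fin (n + 1) → α, |(∏ i, a i (x i)) - ∏ i, b i (x i)| =
        ∑ p : α × (Fin n → α), |(∏ i, a i ((Fin.cons p.1 p.2 : Fin (n+1) → α) i)) -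
          ∏ i, b i ((Fin.cons p.1 p.2 : Fin (n+1) → α) i)| := by
      apply Fintype.sum_equiv (Fin.consEquiv (fun _ => α)).symm
      intro x
      congr 1
      rw [show (Fin.cons ((Fin.consEquiv (fun _ => α)).symm x).1
        ((Fin.consEquiv (fun _ => α)).symm x).2 : Fin (n+1) → α) =
        (Fin.consEquiv (fun _ => α)) ((Fin.consEquiv (fun _ => α)).symm x) from rfl]
      rw [Equiv.apply_symm_apply]
    rw [hre, Fintype.sum_prod_type]
    have hcons0 : ∀ (y : α) (x : Fin n → α) (f : Fin (n+1) → α → ℝ),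
        (∏ i, f i ((Fin.cons y x : Fin (n+1) → α) i)) =
          f 0 y * ∏ i : Fin n, f i.succ (x i) := by
      intro y x f
      rw [Fin.prod_univ_succ]
      simp
    have key : ∀ (y : α) (x : Fin n → α),
        |(∏ i, a i ((Fin.cons y x : Fin (n+1) → α) i)) -
          ∏ i, b i ((Fin.cons y x : Fin (n+1) → α) i)| ≤
        a 0 y * |(∏ i : Fin n, a i.succ (x i)) - ∏ i : Fin n, b i.succ (x i)| +
          |a 0 y - b 0 y| * ∏ i : Fin n, b i.succ (x i) := by
      intro y x
      rw [hcons0 y x a, hcons0 y x b]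
      have hprodb : 0 ≤ ∏ i : Fin n, b i.succ (x i) :=
        Finset.prod_nonneg (fun i _ => hb i.succ (x i))
      calc |a 0 y * ∏ i : Fin n, a i.succ (x i) - b 0 y * ∏ i : Fin n, b i.succ (x i)|
          = |a 0 y * ((∏ i : Fin n, a i.succ (x i)) - ∏ i : Fin n, b i.succ (x i)) +
              (a 0 y - b 0 y) * ∏ i : Fin n, b i.succ (x i)| := by ring_nf
        _ ≤ |a 0 y * ((∏ i : Fin n, a i.succ (x i)) - ∏ i : Fin n, b i.succ (x i))| +
              |(a 0 y - b 0 y) * ∏ i : Fin n, b i.succ (x i)| := abs_add_le _ _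
        _ = a 0 y * |(∏ i : Fin n, a i.succ (x i)) - ∏ i : Fin n, b i.succ (x i)| +
              |a 0 y - b 0 y| * ∏ i : Fin n, b i.succ (x i) := by
            rw [abs_mul, abs_mul, abs_of_nonneg (ha 0 y), abs_of_nonneg hprodb]
    have hPb : ∑ x : Fin n → α, ∏ i : Fin n, b i.succ (x i) ≤ 1 := by
      have hfac : (∏ i : Fin n, ∑ y : α, b i.succ y) =
          ∑ x ∈ Fintype.piFinset (fun _ : Fin n => (Finset.univ : Finset α)),
            ∏ i : Fin n, b i.succ (x i) :=
        Finset.prod_univ_sum _ _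
      rw [Fintype.piFinset_univ] at hfac
      rw [← hfac]
      apply Finset.prod_le_one
      · intro i _
        exact Finset.sum_nonneg (fun y _ => hb i.succ y)
      · intro i _
        exact hb1 i.succ
    have hD := ih (fun i y => a i.succ y) (fun i y => b i.succ y)
      (fun i y => ha i.succ y) (fun i y => hb i.succ y)
      (fun i => ha1 i.succ) (fun i => hb1 i.succ)
    have hDnn : 0 ≤ ∑ x : Fin n → α,
        |(∏ i : Fin n, a i.succ (x i)) - ∏ i : Fin n, b i.succ (x i)| :=
      Finset.sum_nonneg (fun x _ => abs_nonneg _)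
    calc ∑ y : α, ∑ x : Fin n → α, |(∏ i, a i ((Fin.cons y x : Fin (n+1) → α) i)) -
            ∏ i, b i ((Fin.cons y x : Fin (n+1) → α) i)|
        ≤ ∑ y : α, ∑ x : Fin n → α,
            (a 0 y * |(∏ i : Fin n, a i.succ (x i)) - ∏ i : Fin n, b i.succ (x i)| +
              |a 0 y - b 0 y| * ∏ i : Fin n, b i.succ (x i)) := by
          apply Finset.sum_le_sum
          intro y _
          apply Finset.sum_le_sum
          intro x _
          exact key y x
      _ = (∑ y : α, a 0 y) * (∑ x : Fin n → α,
              |(∏ i : Fin n, a i.succ (x i)) - ∏ i : Fin n, b i.succ (x i)|) +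
            (∑ y : α, |a 0 y - b 0 y|) * (∑ x : Fin n → α, ∏ i : Fin n, b i.succ (x i)) := by
          rw [Finset.sum_mul, Finset.sum_mul]
          rw [← Finset.sum_add_distrib]
          apply Finset.sum_congr rfl
          intro y _
          rw [Finset.sum_add_distrib, Finset.mul_sum, Finset.mul_sum]
      _ ≤ 1 * (∑ i : Fin n, ∑ y : α, |a i.succ y - b i.succ y|) +
            (∑ y : α, |a 0 y - b 0 y|) * 1 := by
          apply add_le_add
          · apply mul_le_mul (ha1 0) hD hDnn zero_le_one
          · apply mul_le_mul_of_nonneg_left hPb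
            exact Finset.sum_nonneg (fun y _ => abs_nonneg _)
      _ = ∑ i : Fin (n+1), ∑ y : α, |a i y - b i y| := by
          rw [Fin.sum_univ_succ]
          ring

end

/-- The `m`-fold product truncated discrete Gaussian density over `(ZMod q)^m`. -/
noncomputable def dGaussVec (q : ℕ) [NeZero q] (B : ℝ) (m : ℕ)
    (x : Fin m → ZMod q) : ℝ :=
  ∏ i, dGauss q B (x i)

/-- The Euclidean norm of a vector in `(ZMod q)^m` via representatives in `(−q/2, q/2]`. -/
noncomputable def zqnorm (q : ℕ) [NeZero q] {m : ℕ} (e : Fin m → ZMod q) : ℝ :=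
  Real.sqrt (∑ i, ((zqabs q (e i) : ℝ)) ^ 2)

/-- Total variation bound for shifted truncated discrete Gaussians:
`‖D − (D+e)‖_TV² ≤ 2(1 − exp(−2π√m‖e‖/B))`, where `(D+e)(x) = D(x−e)`. -/
theorem tv_discrete_gaussian_shift (q m : ℕ) [NeZero q] (B : ℝ) (hB : 0 < B)
    (e : Fin m → ZMod q) :
    ((1 / 2) * ∑ x : Fin m → ZMod q,
        |dGaussVec q B m x - dGaussVec q B m (x - e)|) ^ 2 ≤
      2 * (1 - Real.exp (-(2 * Real.pi * Real.sqrt m * zqnorm q e) / B)) := by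
  classical
  set N : ℝ := zqnorm q e with hN
  set sm : ℝ := Real.sqrt m with hsm
  have hN0 : 0 ≤ N := Real.sqrt_nonneg _
  have hsm0 : 0 ≤ sm := Real.sqrt_nonneg _
  set X : ℝ := sm * N / B with hX
  have hX0 : 0 ≤ X := by positivity
  have hexp_eq : -(2 * Real.pi * sm * N) / B = -(2 * Real.pi * X) := by
    rw [hX]; ring
  rw [hexp_eq]
  set TV : ℝ := (1 / 2) * ∑ x : Fin m → ZMod q,
    |dGaussVec q B m x - dGaussVec q B m (x - e)| with hTV
  have hTV0 : 0 ≤ TV := by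
    rw [hTV]
    apply mul_nonneg (by norm_num)
    exact Finset.sum_nonneg (fun x _ => abs_nonneg _)
  -- total mass of product densities
  have hmass : ∑ x : Fin m → ZMod q, dGaussVec q B m x = 1 := by
    unfold dGaussVec
    have hfac : (∏ i : Fin m, ∑ y : ZMod q, dGauss q B y) =
        ∑ x ∈ Fintype.piFinset (fun _ : Fin m => (Finset.univ : Finset (ZMod q))),
          ∏ i : Fin m, dGauss q B (x i) :=
      Finset.prod_univ_sum _ _
    rw [Fintype.piFinset_univ] at hfac
    rw [← hfac]
    rw [Finset.prod_congr rfl (fun i _ => sum_dGauss q hB)]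
    simp
  have hmass' : ∑ x : Fin m → ZMod q, dGaussVec q B m (x - e) = 1 := by
    rw [← hmass]
    exact Fintype.sum_equiv (Equiv.subRight e) _ _ (fun x => rfl)
  have hTV1 : TV ≤ 1 := by
    rw [hTV]
    have h1 : ∑ x : Fin m → ZMod q, |dGaussVec q B m x - dGaussVec q B m (x - e)| ≤
        ∑ x : Fin m → ZMod q, (dGaussVec q B m x + dGaussVec q B m (x - e)) := by
      apply Finset.sum_le_sum
      intro x _
      have h0 : 0 ≤ dGaussVec q B m x :=
        Finset.prod_nonneg (fun i _ => dGauss_nonneg q B _)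
      have h0' : 0 ≤ dGaussVec q B m (x - e) :=
        Finset.prod_nonneg (fun i _ => dGauss_nonneg q B _)
      rw [abs_sub_le_iff]
      constructor <;> linarith
    rw [Finset.sum_add_distrib, hmass, hmass'] at h1
    linarith
  have hpi := Real.pi_gt_d6
  have hpi' := Real.pi_lt_d2
  have hlog := Real.log_two_lt_d9
  have hpi0 := Real.pi_pos
  rcases le_or_gt (Real.log 2) (2 * Real.pi * X) with hcase | hcase
  · -- large shift : trivial bound
    have hexp : Real.exp (-(2 * Real.pi * X)) ≤ 1 / 2 := by
      rw [show (1:ℝ)/2 = Real.exp (-(Real.log 2)) by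
        rw [Real.exp_neg, Real.exp_log (by norm_num : (0:ℝ) < 2)]; norm_num]
      exact Real.exp_le_exp.mpr (by linarith)
    nlinarith
  · -- small shift
    set C : ℝ := 2 * Real.pi + 2.2 with hC
    have hC0 : 0 < C := by rw [hC]; positivity
    -- coordinatewise bound
    have hci : ∀ i : Fin m, ∑ y : ZMod q, |dGauss q B y - dGauss q B (y - e i)| ≤
        2 * (C * (zqabs q (e i) : ℝ) / B) := by
      intro i
      by_cases h0 : zqabs q (e i) = 0
      · have he0 : e i = 0 := eq_zero_of_zqabs_eq_zero q h0
        rw [he0, zqabs_zero]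
        simp
      · have hc1 : 1 ≤ zqabs q (e i) := by
          have := zqabs_nonneg q (e i); omega
        -- the regime hypothesis
        have hm1 : (1:ℝ) ≤ sm := by
          rw [hsm]
          rw [show (1:ℝ) = Real.sqrt 1 by simp]
          apply Real.sqrt_le_sqrt
          have : 0 < m := i.pos
          exact_mod_cast this
        have hciN : (zqabs q (e i) : ℝ) ≤ N := by
          rw [hN]
          unfold zqnorm
          rw [show ((zqabs q (e i) : ℝ)) = Real.sqrt ((zqabs q (e i) : ℝ) ^ 2) by
            rw [Real.sqrt_sq (by exact_mod_cast zqabs_nonneg q (e i))]]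
          apply Real.sqrt_le_sqrt
          apply Finset.single_le_sum (f := fun j => ((zqabs q (e j) : ℝ)) ^ 2)
            (fun j _ => sq_nonneg _) (Finset.mem_univ i)
        have hreg : 2 * Real.pi * (zqabs q (e i) : ℝ) ≤ Real.log 2 * B := by
          have h1 : (zqabs q (e i) : ℝ) ≤ sm * N := by nlinarith
          have h2 : 2 * Real.pi * X < Real.log 2 := hcase
          have h3 : sm * N = X * B := by rw [hX]; field_simp
          nlinarith
        exact single_tv q hB (e i) hc1 hreg
    -- hybrid bound
    have hhyb := hybrid m (fun _ y => dGauss q B y) (fun i y => dGauss q B (y - e i))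
      (fun _ y => dGauss_nonneg q B y) (fun i y => dGauss_nonneg q B _)
      (fun _ => le_of_eq (sum_dGauss q hB)) (fun i => le_of_eq (sum_dGauss_shift q hB (e i)))
    have hmatch : ∑ x : Fin m → ZMod q, |dGaussVec q B m x - dGaussVec q B m (x - e)| =
        ∑ x : Fin m → ZMod q, |(∏ i, dGauss q B (x i)) - ∏ i, dGauss q B (x i - e i)| := by
      apply Finset.sum_congr rfl
      intro x _
      unfold dGaussVec
      congr 1
    -- sum of coordinates
    have hsumci : ∑ i : Fin m, (zqabs q (e i) : ℝ) ≤ sm * N := by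
      set S : ℝ := ∑ i : Fin m, (zqabs q (e i) : ℝ) with hS
      have hS0 : 0 ≤ S :=
        Finset.sum_nonneg (fun i _ => by exact_mod_cast zqabs_nonneg q (e i))
      have hcs : S ^ 2 ≤ (m : ℝ) * ∑ i : Fin m, ((zqabs q (e i) : ℝ)) ^ 2 := by
        have := sq_sum_le_card_mul_sum_sq (s := (Finset.univ : Finset (Fin m)))
          (f := fun i => ((zqabs q (e i) : ℝ)))
        simpa using this
      have hsq : S = Real.sqrt (S ^ 2) := (Real.sqrt_sq hS0).symm
      rw [hsq]
      have : sm * N = Real.sqrt ((m : ℝ) * ∑ i : Fin m, ((zqabs q (e i) : ℝ)) ^ 2) := by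
        rw [hsm, hN]
        unfold zqnorm
        rw [← Real.sqrt_mul (by positivity)]
      rw [this]
      exact Real.sqrt_le_sqrt hcs
    have hTVle : TV ≤ C * X := by
      rw [hTV, hmatch]
      have h1 : ∑ x : Fin m → ZMod q, |(∏ i, dGauss q B (x i)) - ∏ i, dGauss q B (x i - e i)| ≤
          ∑ i : Fin m, 2 * (C * (zqabs q (e i) : ℝ) / B) := by
        refine hhyb.trans ?_
        exact Finset.sum_le_sum (fun i _ => hci i)
      have h2 : ∑ i : Fin m, 2 * (C * (zqabs q (e i) : ℝ) / B) =
          (2 * C / B) * ∑ i : Fin m, (zqabs q (e i) : ℝ) := by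
        rw [Finset.mul_sum]
        apply Finset.sum_congr rfl
        intro i _
        ring
      have h3 : (2 * C / B) * (∑ i : Fin m, (zqabs q (e i) : ℝ)) ≤ (2 * C / B) * (sm * N) := by
        apply mul_le_mul_of_nonneg_left hsumci (by positivity)
      have h4 : (2 * C / B) * (sm * N) = 2 * (C * X) := by
        rw [hX]; field_simp
      rw [h2] at h1
      linarith [h1, h3, h4.le, h4.ge]
    -- final numerics
    clear_value TV X C
    clear hTV hX hhyb hmatch hci hmass hmass' hsumci hexp_eq hN hsm
    have hquad := exp_neg_le_quadratic (t := 2 * Real.pi * X) (by positivity)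
    have hTVsq : TV ^ 2 ≤ (C * X) ^ 2 := by
      apply pow_le_pow_left₀ hTV0 hTVle
    have hXb : X * (C ^ 2 + 4 * Real.pi ^ 2) ≤ 4 * Real.pi := by
      have h1 : 2 * Real.pi * X ≤ 0.69315 := by linarith
      have hC2 : C ^ 2 + 4 * Real.pi ^ 2 ≤ 112 := by rw [hC]; nlinarith
      have h8 : (78.9:ℝ) ≤ 8 * Real.pi ^ 2 := by nlinarith
      nlinarith [mul_le_mul_of_nonneg_left hC2 hX0]
    have h2t : 2 * (2 * Real.pi * X) - (2 * Real.pi * X) ^ 2 ≤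
        2 * (1 - Real.exp (-(2 * Real.pi * X))) := by linarith
    have hfin : (C * X) ^ 2 + (2 * Real.pi * X) ^ 2 ≤ 2 * (2 * Real.pi * X) := by
      have hh := mul_le_mul_of_nonneg_left hXb hX0
      nlinarith [hh]
    linarith [hTVsq, hfin, h2t]
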